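/- Fix real constants c_{jk} (j,k ∈ {1,2}) and consider the polynomial three-web given by f¹ = x¹ + y¹, f² = x² + y² + ∑_{j,k} c_{jk} x^j y^k on the domain where Δ₁ := 1 + c₂₁y¹ + c₂₂y² ≠ 0 and Δ₂ := 1 + c₁₂x¹ + c₂₂x² ≠ 0. With α := c₁₁c₂₂ − c₁₂c₂₁ and β := α(x¹ − y¹) + c₁₂ − c₂₁, the torsion covector of this web is a₁ = −β/(Δ₁Δ₂) and a₂ = 0. -/

import Mathlib

noncomputable section

open Matrix

/-- Partial derivative of `g` with respect to the `j`-th coordinate at the point `x`. -/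
def pd (j : Fin 2) (g : (Fin 2 → ℝ) → ℝ) (x : Fin 2 → ℝ) : ℝ :=
  deriv (fun t => g (Function.update x j t)) (x j)

variable (f : Fin 2 → (Fin 2 → ℝ) → (Fin 2 → ℝ) → ℝ)

/-- Jacobian matrix `f̄ = (∂fⁱ/∂xʲ)` with respect to the first group of variables. -/
def fbar (x y : Fin 2 → ℝ) : Matrix (Fin 2) (Fin 2) ℝ :=
  Matrix.of fun i j => pd j (fun x' => f i x' y) x

/-- Jacobian matrix `f̃ = (∂fⁱ/∂yʲ)` with respect to the second group of variables. -/
def ftil (x y : Fin 2 → ℝ) : Matrix (Fin 2) (Fin 2) ℝ :=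
  Matrix.of fun i j => pd j (fun y' => f i x y') y

/-- Mixed second partial derivative `∂²fⁱ/∂xˡ∂yᵐ`. -/
def d2 (i l m : Fin 2) (x y : Fin 2 → ℝ) : ℝ :=
  pd m (fun y' => pd l (fun x' => f i x' y') x) y

/-- Connection coefficients
`Γⁱⱼₖ = −∑_{l,m} (∂²fⁱ/∂xˡ∂yᵐ) ḡˡⱼ g̃ᵐₖ`, where `ḡ = f̄⁻¹`, `g̃ = f̃⁻¹`. -/
def Gam (i j k : Fin 2) (x y : Fin 2 → ℝ) : ℝ :=
  - ∑ l : Fin 2, ∑ m : Fin 2,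
      d2 f i l m x y * (fbar f x y)⁻¹ l j * (ftil f x y)⁻¹ m k

/-- Torsion covector `aⱼ = ∑ₖ (Γᵏⱼₖ − Γᵏₖⱼ)`. -/
def aCov (j : Fin 2) (x y : Fin 2 → ℝ) : ℝ :=
  ∑ k : Fin 2, (Gam f k j k x y - Gam f k k j x y)

/-- Covariant derivative `p_{ik} = ∑ₘ (∂aᵢ/∂xᵐ) ḡᵐₖ − ∑ⱼ aⱼ Γʲₖᵢ`. -/
def pCov (i k : Fin 2) (x y : Fin 2 → ℝ) : ℝ :=
  (∑ m : Fin 2, pd m (fun x' => aCov f i x' y) x * (fbar f x y)⁻¹ m k)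
    - ∑ j : Fin 2, aCov f j x y * Gam f j k i x y

/-- Covariant derivative `q_{ik} = ∑ₘ (∂aᵢ/∂yᵐ) g̃ᵐₖ − ∑ⱼ aⱼ Γʲᵢₖ`. -/
def qCov (i k : Fin 2) (x y : Fin 2 → ℝ) : ℝ :=
  (∑ m : Fin 2, pd m (fun y' => aCov f i x y') y * (ftil f x y)⁻¹ m k)
    - ∑ j : Fin 2, aCov f j x y * Gam f j i k x y

/-- Isoclinicity invariant `p = (p₁₂ − p₂₁)/2`. -/
def pIso (x y : Fin 2 → ℝ) : ℝ := (pCov f 0 1 x y - pCov f 1 0 x y) / 2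

/-- Isoclinicity invariant `q = (q₁₂ − q₂₁)/2`. -/
def qIso (x y : Fin 2 → ℝ) : ℝ := (qCov f 0 1 x y - qCov f 1 0 x y) / 2


/-- The polynomial web `f¹ = x¹ + y¹`, `f² = x² + y² + ∑_{j,k} c_{jk} x^j y^k`
with fixed real constants `c_{jk}`.
(Indices: `x 0 ↦ x¹`, `x 1 ↦ x²`, `y 0 ↦ y¹`, `y 1 ↦ y²`; `c 0 0 ↦ c₁₁` etc.) -/
noncomputable def webD (c : Fin 2 → Fin 2 → ℝ) :
    Fin 2 → (Fin 2 → ℝ) → (Fin 2 → ℝ) → ℝ :=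
  ![fun x y => x 0 + y 0,
    fun x y => x 1 + y 1 + ∑ j : Fin 2, ∑ k : Fin 2, c j k * x j * y k]


lemma deriv_affine (a b t : ℝ) : deriv (fun s : ℝ => a * s + b) t = a := by
  simpa using (((hasDerivAt_id t).const_mul a).add_const b).deriv

variable (c : Fin 2 → Fin 2 → ℝ)

lemma pdx0_f0 (x y : Fin 2 → ℝ) : pd 0 (fun x' => webD c 0 x' y) x = 1 := by
  have : (fun t => webD c 0 (Function.update x 0 t) y)
      = fun t => (1:ℝ) * t + y 0 := by
    funext t; simp [webD]; try ring
  rw [pd, this, deriv_affine]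

lemma pdx1_f0 (x y : Fin 2 → ℝ) : pd 1 (fun x' => webD c 0 x' y) x = 0 := by
  have : (fun t => webD c 0 (Function.update x 1 t) y)
      = fun t => (0:ℝ) * t + (x 0 + y 0) := by
    funext t; simp [webD]
  rw [pd, this, deriv_affine]

lemma pdx0_f1 (x y : Fin 2 → ℝ) :
    pd 0 (fun x' => webD c 1 x' y) x = c 0 0 * y 0 + c 0 1 * y 1 := by
  have : (fun t => webD c 1 (Function.update x 0 t) y)
      = fun t => (c 0 0 * y 0 + c 0 1 * y 1) * t
          + (x 1 + y 1 + c 1 0 * x 1 * y 0 + c 1 1 * x 1 * y 1) := by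
    funext t
    simp [webD, Fin.sum_univ_two, Function.update, Fin.ext_iff]
    ring
  rw [pd, this, deriv_affine]

lemma pdx1_f1 (x y : Fin 2 → ℝ) :
    pd 1 (fun x' => webD c 1 x' y) x = 1 + c 1 0 * y 0 + c 1 1 * y 1 := by
  have : (fun t => webD c 1 (Function.update x 1 t) y)
      = fun t => (1 + c 1 0 * y 0 + c 1 1 * y 1) * t
          + (y 1 + c 0 0 * x 0 * y 0 + c 0 1 * x 0 * y 1) := by
    funext t
    simp [webD, Fin.sum_univ_two, Function.update, Fin.ext_iff]
    ring
  rw [pd, this, deriv_affine]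

lemma pdy0_f0 (x y : Fin 2 → ℝ) : pd 0 (fun y' => webD c 0 x y') y = 1 := by
  have : (fun t => webD c 0 x (Function.update y 0 t))
      = fun t => (1:ℝ) * t + x 0 := by
    funext t; simp [webD]; try ring
  rw [pd, this, deriv_affine]

lemma pdy1_f0 (x y : Fin 2 → ℝ) : pd 1 (fun y' => webD c 0 x y') y = 0 := by
  have : (fun t => webD c 0 x (Function.update y 1 t))
      = fun t => (0:ℝ) * t + (x 0 + y 0) := by
    funext t; simp [webD]
  rw [pd, this, deriv_affine]

lemma pdy0_f1 (x y : Fin 2 → ℝ) :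
    pd 0 (fun y' => webD c 1 x y') y = c 0 0 * x 0 + c 1 0 * x 1 := by
  have : (fun t => webD c 1 x (Function.update y 0 t))
      = fun t => (c 0 0 * x 0 + c 1 0 * x 1) * t
          + (x 1 + y 1 + c 0 1 * x 0 * y 1 + c 1 1 * x 1 * y 1) := by
    funext t
    simp [webD, Fin.sum_univ_two, Function.update, Fin.ext_iff]
    ring
  rw [pd, this, deriv_affine]

lemma pdy1_f1 (x y : Fin 2 → ℝ) :
    pd 1 (fun y' => webD c 1 x y') y = 1 + c 0 1 * x 0 + c 1 1 * x 1 := by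
  have : (fun t => webD c 1 x (Function.update y 1 t))
      = fun t => (1 + c 0 1 * x 0 + c 1 1 * x 1) * t
          + (x 1 + c 0 0 * x 0 * y 0 + c 1 0 * x 1 * y 0) := by
    funext t
    simp [webD, Fin.sum_univ_two, Function.update, Fin.ext_iff]
    ring
  rw [pd, this, deriv_affine]

lemma pd_const (a : ℝ) (z : Fin 2 → ℝ) (j : Fin 2) :
    pd j (fun _ : Fin 2 → ℝ => a) z = 0 := by
  have : (fun t : ℝ => a) = fun t : ℝ => (0:ℝ) * t + a := by funext t; ring_nf
  rw [pd, this, deriv_affine]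

lemma d2_f0 (l m : Fin 2) (x y : Fin 2 → ℝ) : d2 (webD c) 0 l m x y = 0 := by
  fin_cases l <;> fin_cases m <;>
    · rw [d2]
      simp only [Fin.mk_zero, Fin.mk_one, pdx0_f0, pdx1_f0, pd_const]

lemma d2_f1 (l m : Fin 2) (x y : Fin 2 → ℝ) : d2 (webD c) 1 l m x y = c l m := by
  fin_cases l <;> fin_cases m <;>
    · rw [d2]
      simp only [Fin.mk_zero, Fin.mk_one, pdx0_f1, pdx1_f1]
      rw [pd]
      first
      | (rw [show (fun t => c 0 0 * Function.update y 0 t 0 + c 0 1 * Function.update y 0 t 1)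
            = fun t => c 0 0 * t + c 0 1 * y 1 by funext t; simp, deriv_affine])
      | (rw [show (fun t => c 0 0 * Function.update y 1 t 0 + c 0 1 * Function.update y 1 t 1)
            = fun t => c 0 1 * t + c 0 0 * y 0 by funext t; simp; ring, deriv_affine])
      | (rw [show (fun t => 1 + c 1 0 * Function.update y 0 t 0 + c 1 1 * Function.update y 0 t 1)
            = fun t => c 1 0 * t + (1 + c 1 1 * y 1) by funext t; simp; ring, deriv_affine])
      | (rw [show (fun t => 1 + c 1 0 * Function.update y 1 t 0 + c 1 1 * Function.update y 1 t 1)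
            = fun t => c 1 1 * t + (1 + c 1 0 * y 0) by funext t; simp; ring, deriv_affine])

lemma fbar_webD (x y : Fin 2 → ℝ) :
    fbar (webD c) x y
      = !![1, 0; c 0 0 * y 0 + c 0 1 * y 1, 1 + c 1 0 * y 0 + c 1 1 * y 1] := by
  ext i j
  fin_cases i <;> fin_cases j <;>
    simp [fbar, pdx0_f0, pdx1_f0, pdx0_f1, pdx1_f1]

lemma ftil_webD (x y : Fin 2 → ℝ) :
    ftil (webD c) x y
      = !![1, 0; c 0 0 * x 0 + c 1 0 * x 1, 1 + c 0 1 * x 0 + c 1 1 * x 1] := by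
  ext i j
  fin_cases i <;> fin_cases j <;>
    simp [ftil, pdy0_f0, pdy1_f0, pdy0_f1, pdy1_f1]

lemma inv_tri (s d : ℝ) (hd : d ≠ 0) :
    (!![1, 0; s, d] : Matrix (Fin 2) (Fin 2) ℝ)⁻¹ = !![1, 0; -s/d, 1/d] := by
  apply Matrix.inv_eq_right_inv
  ext i j
  fin_cases i <;> fin_cases j <;>
    · simp [Matrix.mul_apply, Fin.sum_univ_two]
      try field_simp
      try ring

theorem webD_torsion_covector' (x y : Fin 2 → ℝ)
    (Δ₁ Δ₂ α β : ℝ)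
    (hΔ₁ : Δ₁ = 1 + c 1 0 * y 0 + c 1 1 * y 1)
    (hΔ₂ : Δ₂ = 1 + c 0 1 * x 0 + c 1 1 * x 1)
    (hα : α = c 0 0 * c 1 1 - c 0 1 * c 1 0)
    (hβ : β = α * (x 0 - y 0) + c 0 1 - c 1 0)
    (h1 : Δ₁ ≠ 0) (h2 : Δ₂ ≠ 0) :
    aCov (webD c) 0 x y = -β / (Δ₁ * Δ₂) ∧
    aCov (webD c) 1 x y = 0 := by
  have hf : (fbar (webD c) x y)⁻¹
      = !![1, 0; -(c 0 0 * y 0 + c 0 1 * y 1)/Δ₁, 1/Δ₁] := by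
    rw [fbar_webD, ← hΔ₁, inv_tri _ _ h1]
  have ht : (ftil (webD c) x y)⁻¹
      = !![1, 0; -(c 0 0 * x 0 + c 1 0 * x 1)/Δ₂, 1/Δ₂] := by
    rw [ftil_webD, ← hΔ₂, inv_tri _ _ h2]
  constructor <;>
  · simp only [aCov, Gam, Fin.sum_univ_two, d2_f0, d2_f1, hf, ht,
      Matrix.cons_val', Matrix.cons_val_zero, Matrix.cons_val_one,
      Matrix.head_cons, Matrix.empty_val', Matrix.cons_val_fin_one,
      Matrix.head_fin_const, Matrix.of_apply]
    subst hβ hα hΔ₁ hΔ₂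
    have h1' : 1 + c 1 1 * y 1 + c 1 0 * y 0 ≠ 0 := by convert h1 using 1; ring
    have h2' : 1 + x 0 * c 0 1 + x 1 * c 1 1 ≠ 0 := by convert h2 using 1; ring
    field_simp
    ring


/-- For the polynomial web `webD c` on the domain
`Δ₁ = 1 + c₂₁y¹ + c₂₂y² ≠ 0`, `Δ₂ = 1 + c₁₂x¹ + c₂₂x² ≠ 0`, with
`α = c₁₁c₂₂ − c₁₂c₂₁` and `β = α(x¹ − y¹) + c₁₂ − c₂₁`, the torsion covector is
`a₁ = −β/(Δ₁Δ₂)` and `a₂ = 0`. -/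
theorem webD_torsion_covector (c : Fin 2 → Fin 2 → ℝ) (x y : Fin 2 → ℝ)
    (Δ₁ Δ₂ α β : ℝ)
    (hΔ₁ : Δ₁ = 1 + c 1 0 * y 0 + c 1 1 * y 1)
    (hΔ₂ : Δ₂ = 1 + c 0 1 * x 0 + c 1 1 * x 1)
    (hα : α = c 0 0 * c 1 1 - c 0 1 * c 1 0)
    (hβ : β = α * (x 0 - y 0) + c 0 1 - c 1 0)
    (h1 : Δ₁ ≠ 0) (h2 : Δ₂ ≠ 0) :
    aCov (webD c) 0 x y = -β / (Δ₁ * Δ₂) ∧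
    aCov (webD c) 1 x y = 0 :=
  webD_torsion_covector' c x y Δ₁ Δ₂ α β hΔ₁ hΔ₂ hα hβ h1 h2

end
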